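/- arXiv:1102.1590 — 6 statements merged into one kernel-verified Lean document; each statement's English description precedes it below -/
import Mathlib

section
/- Let Σ be an s×m real matrix and let Ψ(x) = (x^{y_1}, ..., x^{y_m}) be a vector of monomials in variables x_1,...,x_s. Suppose there is a partition I_1,...,I_d of {1,...,m} and a basis b^1,...,b^d of ker(Σ) with supp(b^j) = I_j. Then the ideal generated by the s entries of Σ·Ψ(x) in ℝ[x_1,...,x_s] equals the ideal generated by the binomials b^j_{j1}·x^{y_{j2}} − b^j_{j2}·x^{y_{j1}} for all j1, j2 ∈ I_j and all 1 ≤ j ≤ d. -/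
open MvPolynomial

/-- If ker(Σ) has a basis with disjoint supports partitioning the
columns, then the steady state ideal ⟨entries of Σ·Ψ(x)⟩ equals the ideal
generated by the binomials b^j_{j1}·x^{y_{j2}} − b^j_{j2}·x^{y_{j1}}. -/
theorem stmt0 (s m d : ℕ) (Sig : Matrix (Fin s) (Fin m) ℝ)
    (y : Fin m → Fin s → ℕ)
    (I : Fin d → Finset (Fin m))
    (hNonempty : ∀ j, (I j).Nonempty)
    (hDisj : ∀ j j', j ≠ j' → Disjoint (I j) (I j'))
    (hCover : ∀ i : Fin m, ∃ j, i ∈ I j)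
    (b : Fin d → Fin m → ℝ)
    (hker : ∀ j, Sig.mulVec (b j) = 0)
    (hsupp : ∀ j i, b j i ≠ 0 ↔ i ∈ I j)
    (hspan : ∀ v : Fin m → ℝ, Sig.mulVec v = 0 →
      v ∈ Submodule.span ℝ (Set.range b)) :
    Ideal.span (Set.range fun i : Fin s =>
        ∑ j : Fin m, C (Sig i j) * ∏ l : Fin s, X l ^ y j l) =
    Ideal.span { p : MvPolynomial (Fin s) ℝ | ∃ j j1 j2,
        j1 ∈ I j ∧ j2 ∈ I j ∧
        p = C (b j j1) * ∏ l : Fin s, X l ^ y j2 l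
            - C (b j j2) * ∏ l : Fin s, X l ^ y j1 l } := by
  set Psi : Fin m → MvPolynomial (Fin s) ℝ := fun k => ∏ l : Fin s, X l ^ y k l with hPsi
  apply le_antisymm
  · -- LHS ≤ RHS
    rw [Ideal.span_le]
    rintro _ ⟨i, rfl⟩
    simp only [SetLike.mem_coe]
    have hpart : ∀ F : Fin m → MvPolynomial (Fin s) ℝ,
        ∑ k : Fin m, F k = ∑ j0 : Fin d, ∑ k ∈ I j0, F k := by
      intro F
      have huniv : (Finset.univ : Finset (Fin m)) = Finset.univ.biUnion I := by
        ext k; simpa using hCover k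
      rw [huniv, Finset.sum_biUnion]
      intro a _ c _ hac
      exact hDisj a c hac
    rw [hpart]
    apply Ideal.sum_mem
    intro j0 _
    obtain ⟨t, ht⟩ := hNonempty j0
    have hbt : b j0 t ≠ 0 := (hsupp j0 t).2 ht
    have hz : ∑ k ∈ I j0, Sig i k * b j0 k = 0 := by
      have h1 := congrFun (hker j0) i
      simp only [Matrix.mulVec, dotProduct, Pi.zero_apply] at h1
      rw [← h1]
      apply Finset.sum_subset (Finset.subset_univ _)
      intro k _ hk
      have : b j0 k = 0 := by
        by_contra h; exact hk ((hsupp j0 k).1 h)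
      simp [this]
    have key : ∑ k ∈ I j0, C (Sig i k) * Psi k
        = ∑ k ∈ I j0, C (Sig i k / b j0 t) * (C (b j0 t) * Psi k - C (b j0 k) * Psi t) := by
      have : ∀ k ∈ I j0, C (Sig i k / b j0 t) * (C (b j0 t) * Psi k - C (b j0 k) * Psi t)
          = C (Sig i k) * Psi k - C (Sig i k * b j0 k / b j0 t) * Psi t := by
        intro k _
        rw [mul_sub, ← mul_assoc, ← C_mul, div_mul_cancel₀ _ hbt, ← mul_assoc, ← C_mul]
        ring_nf
      rw [Finset.sum_congr rfl this, Finset.sum_sub_distrib, ← Finset.sum_mul,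
        ← map_sum, ← Finset.sum_div, hz]
      simp
    rw [key]
    apply Ideal.sum_mem
    intro k hk
    apply Ideal.mul_mem_left
    apply Ideal.subset_span
    exact ⟨j0, t, k, ht, hk, rfl⟩
  · -- RHS ≤ LHS
    rw [Ideal.span_le]
    rintro p ⟨j, j1, j2, h1, h2, rfl⟩
    simp only [SetLike.mem_coe]
    set u : Fin m → ℝ := Pi.single j2 (b j j1) - Pi.single j1 (b j j2) with hu
    have hurow : u ∈ Submodule.span ℝ (Set.range fun i => Sig i) := by
      rw [← Subspace.forall_mem_dualAnnihilator_apply_eq_zero_iff]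
      intro f hf
      rw [Submodule.mem_dualAnnihilator] at hf
      set v : Fin m → ℝ := fun k => f (fun j' => if k = j' then 1 else 0) with hv
      have hfx : ∀ x : Fin m → ℝ, f x = ∑ k, x k * v k := by
        intro x
        rw [LinearMap.pi_apply_eq_sum_univ f x]
        simp [hv, smul_eq_mul]
      have hvker : Sig.mulVec v = 0 := by
        funext i
        have := hf (Sig i) (Submodule.subset_span ⟨i, rfl⟩)
        rw [hfx] at this
        simpa [Matrix.mulVec, dotProduct] using this
      have hvspan := hspan v hvker
      -- dot product with u functional
      let φ : (Fin m → ℝ) →ₗ[ℝ] ℝ :=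
        { toFun := fun w => ∑ k, u k * w k
          map_add' := by intro a c; simp [mul_add, Finset.sum_add_distrib]
          map_smul' := by
            intro r a
            simp only [smul_eq_mul, RingHom.id_apply, Pi.smul_apply]
            rw [Finset.mul_sum]
            exact Finset.sum_congr rfl fun k _ => by ring }
      have hφb : ∀ j', φ (b j') = 0 := by
        intro j'
        have hexp : φ (b j') = b j j1 * b j' j2 - b j j2 * b j' j1 := by
          simp only [φ, LinearMap.coe_mk, AddHom.coe_mk, hu, Pi.sub_apply, sub_mul,
            Finset.sum_sub_distrib, Pi.single_apply, ite_mul, zero_mul]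
          rw [Finset.sum_ite_eq' , Finset.sum_ite_eq']
          simp
        rw [hexp]
        by_cases hjj : j' = j
        · subst hjj; ring
        · have d1 : j2 ∉ I j' := Finset.disjoint_left.mp (hDisj j j' (Ne.symm hjj)) h2
          have d2 : j1 ∉ I j' := Finset.disjoint_left.mp (hDisj j j' (Ne.symm hjj)) h1
          have e1 : b j' j2 = 0 := by
            by_contra h; exact d1 ((hsupp j' j2).1 h)
          have e2 : b j' j1 = 0 := by
            by_contra h; exact d2 ((hsupp j' j1).1 h)
          rw [e1, e2]; ring
      have hdot : φ v = 0 := by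
        have : Submodule.span ℝ (Set.range b) ≤ LinearMap.ker φ := by
          rw [Submodule.span_le]
          rintro _ ⟨j', rfl⟩
          exact hφb j'
        exact this hvspan
      rw [hfx]
      simpa [φ] using hdot
    rw [Submodule.mem_span_range_iff_exists_fun] at hurow
    obtain ⟨c, hc⟩ := hurow
    have key : C (b j j1) * Psi j2 - C (b j j2) * Psi j1
        = ∑ i : Fin s, C (c i) * ∑ k : Fin m, C (Sig i k) * Psi k := by
      have : ∀ i : Fin s, C (c i) * ∑ k : Fin m, C (Sig i k) * Psi k
          = ∑ k : Fin m, C (c i * Sig i k) * Psi k := by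
        intro i
        rw [Finset.mul_sum]
        exact Finset.sum_congr rfl fun k _ => by rw [← mul_assoc, ← C_mul]
      rw [Finset.sum_congr rfl fun i _ => this i, Finset.sum_comm]
      have huk : ∀ k, ∑ i : Fin s, c i * Sig i k = u k := by
        intro k
        have := congrFun hc k
        simpa [Finset.sum_apply, smul_eq_mul] using this
      calc C (b j j1) * Psi j2 - C (b j j2) * Psi j1
          = ∑ k : Fin m, C (u k) * Psi k := by
            simp only [hu, Pi.sub_apply, map_sub, sub_mul, Finset.sum_sub_distrib,
              Pi.single_apply, apply_ite C, map_zero, ite_mul, zero_mul]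
            rw [Finset.sum_ite_eq', Finset.sum_ite_eq']
            simp
        _ = ∑ k : Fin m, ∑ i : Fin s, C (c i * Sig i k) * Psi k := by
            refine Finset.sum_congr rfl fun k _ => ?_
            rw [← Finset.sum_mul, ← map_sum, huk k]
    rw [key]
    apply Ideal.sum_mem
    intro i _
    apply Ideal.mul_mem_left
    exact Ideal.subset_span ⟨i, rfl⟩
end

section
/- Let Σ be an s×m real matrix admitting a partition I_1,...,I_d of {1,...,m} and a basis b^1,...,b^d of ker(Σ) with supp(b^j) = I_j. The vectors β^j_{j1,j2} := b^j_{j1} e_{j2} − b^j_{j2} e_{j1}, for j1, j2 ∈ I_j and 1 ≤ j ≤ d, span the orthogonal complement of ker(Σ) in ℝ^m. -/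
/-- Key auxiliary: for any `w` in the kernel and `j1, j2` in block `I j`,
the "cross term" vanishes. -/
theorem stmt1 (s m d : ℕ) (Sig : Matrix (Fin s) (Fin m) ℝ)
    (I : Fin d → Finset (Fin m))
    (hNonempty : ∀ j, (I j).Nonempty)
    (hDisj : ∀ j j', j ≠ j' → Disjoint (I j) (I j'))
    (hCover : ∀ i : Fin m, ∃ j, i ∈ I j)
    (b : Fin d → Fin m → ℝ)
    (hker : ∀ j, Sig.mulVec (b j) = 0)
    (hsupp : ∀ j i, b j i ≠ 0 ↔ i ∈ I j)
    (hspan : ∀ v : Fin m → ℝ, Sig.mulVec v = 0 →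
      v ∈ Submodule.span ℝ (Set.range b)) :
    ∀ v : Fin m → ℝ,
      (v ∈ Submodule.span ℝ { β : Fin m → ℝ | ∃ j j1 j2,
          j1 ∈ I j ∧ j2 ∈ I j ∧
          β = b j j1 • (Pi.single j2 1 : Fin m → ℝ) - b j j2 • (Pi.single j1 1 : Fin m → ℝ) })
      ↔ (∀ w : Fin m → ℝ, Sig.mulVec w = 0 → dotProduct v w = 0) := by
  classical
  -- key: cross terms vanish on kernel vectors
  have key : ∀ w : Fin m → ℝ, Sig.mulVec w = 0 → ∀ j j1 j2, j1 ∈ I j → j2 ∈ I j →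
      b j j1 * w j2 - b j j2 * w j1 = 0 := by
    intro w hw j j1 j2 h1 h2
    let M : (Fin m → ℝ) →ₗ[ℝ] ℝ :=
      { toFun := fun x => b j j1 * x j2 - b j j2 * x j1
        map_add' := by intro x y; simp; ring
        map_smul' := by intro c x; simp; ring }
    have hmem : w ∈ LinearMap.ker M := by
      apply Submodule.span_le.mpr _ (hspan w hw)
      rintro x ⟨j', rfl⟩
      simp only [SetLike.mem_coe, LinearMap.mem_ker]
      by_cases hj : j' = j
      · subst hj; show b j' j1 * b j' j2 - b j' j2 * b j' j1 = 0; ring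
      · have e1 : b j' j1 = 0 := by
          by_contra h
          exact Finset.disjoint_left.mp (hDisj j j' fun e => hj e.symm) h1 ((hsupp j' j1).mp h)
        have e2 : b j' j2 = 0 := by
          by_contra h
          exact Finset.disjoint_left.mp (hDisj j j' fun e => hj e.symm) h2 ((hsupp j' j2).mp h)
        show b j j1 * b j' j2 - b j j2 * b j' j1 = 0
        rw [e1, e2]; ring
    simpa [M] using hmem
  intro v
  constructor
  · -- forward direction
    intro hv w hw
    let L : (Fin m → ℝ) →ₗ[ℝ] ℝ :=
      { toFun := fun x => dotProduct x w
        map_add' := fun x y => add_dotProduct x y w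
        map_smul' := fun c x => smul_dotProduct c x w }
    have : v ∈ LinearMap.ker L := by
      apply Submodule.span_le.mpr _ hv
      rintro β ⟨j, j1, j2, h1, h2, rfl⟩
      simp only [SetLike.mem_coe, LinearMap.mem_ker]
      have : L (b j j1 • (Pi.single j2 1 : Fin m → ℝ) - b j j2 • (Pi.single j1 1 : Fin m → ℝ))
          = b j j1 * w j2 - b j j2 * w j1 := by
        simp [L, sub_dotProduct, smul_dotProduct, single_dotProduct]
      rw [this]
      exact key w hw j j1 j2 h1 h2
    simpa [L] using this
  · -- backward direction
    intro h
    -- block decomposition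
    have hblock : ∀ j : Fin d, (fun k => if k ∈ I j then v k else 0) ∈
        Submodule.span ℝ { β : Fin m → ℝ | ∃ j j1 j2,
          j1 ∈ I j ∧ j2 ∈ I j ∧
          β = b j j1 • (Pi.single j2 1 : Fin m → ℝ) - b j j2 • (Pi.single j1 1 : Fin m → ℝ) } := by
      intro j
      obtain ⟨i0, hi0⟩ := hNonempty j
      have hc0 : b j i0 ≠ 0 := (hsupp j i0).mpr hi0
      -- the total block sum vanishes
      have hsum : ∑ i ∈ I j, v i * b j i = 0 := by
        have h0 : dotProduct v (b j) = 0 := h (b j) (hker j)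
        have : ∑ i ∈ I j, v i * b j i = ∑ i : Fin m, v i * b j i := by
          apply Finset.sum_subset (Finset.subset_univ _)
          intro i _ hi
          have : b j i = 0 := by
            by_contra hbi; exact hi ((hsupp j i).mp hbi)
          rw [this, mul_zero]
        rw [this]
        simpa [dotProduct] using h0
      have heq : (fun k => if k ∈ I j then v k else 0) =
          ∑ i ∈ I j, (v i / b j i0) •
            (b j i0 • (Pi.single i 1 : Fin m → ℝ) - b j i • (Pi.single i0 1 : Fin m → ℝ)) := by
        funext k
        simp only [Finset.sum_apply, Pi.smul_apply, Pi.sub_apply, Pi.single_apply,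
          smul_eq_mul]
        have expand : ∀ i ∈ I j, (v i / b j i0) *
            (b j i0 * (if k = i then (1:ℝ) else 0) - b j i * (if k = i0 then (1:ℝ) else 0))
            = (if k = i then v i else 0) - (if k = i0 then (v i * b j i) / b j i0 else 0) := by
          intro i _
          by_cases h1 : k = i
          · by_cases h2 : k = i0
            · rw [if_pos h1, if_pos h2, if_pos h1, if_pos h2]; field_simp
            · rw [if_pos h1, if_neg h2, if_pos h1, if_neg h2]; field_simp; ring
          · by_cases h2 : k = i0
            · rw [if_neg h1, if_pos h2, if_neg h1, if_pos h2]; field_simp; ring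
            · rw [if_neg h1, if_neg h2, if_neg h1, if_neg h2]; simp
        rw [Finset.sum_congr rfl expand, Finset.sum_sub_distrib]
        have t1 : ∑ i ∈ I j, (if k = i then v i else 0) = if k ∈ I j then v k else 0 :=
          Finset.sum_ite_eq (I j) k v
        have t2 : ∑ i ∈ I j, (if k = i0 then (v i * b j i) / b j i0 else 0) = 0 := by
          by_cases hk : k = i0
          · simp only [if_pos hk, ← Finset.sum_div, hsum, zero_div]
          · simp [hk]
        rw [t1, t2, sub_zero]
      rw [heq]
      apply Submodule.sum_smul_mem
      intro i hi
      apply Submodule.subset_span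
      exact ⟨j, i0, i, hi0, hi, rfl⟩
    have hv : v = ∑ j : Fin d, (fun k => if k ∈ I j then v k else 0) := by
      funext k
      obtain ⟨j0, hj0⟩ := hCover k
      rw [Finset.sum_apply]
      rw [Finset.sum_eq_single j0]
      · simp [hj0]
      · intro j _ hjj
        have : k ∉ I j := fun hk => Finset.disjoint_left.mp (hDisj j j0 hjj) hk hj0
        simp [this]
      · intro hj; exact absurd (Finset.mem_univ j0) hj
    rw [hv]
    exact Submodule.sum_mem _ fun j _ => hblock j
end

section
/- Consider the binomial system b^j_{j1} x^{y_{j2}} − b^j_{j2} x^{y_{j1}} = 0 (for all j1,j2 ∈ I_j, 1 ≤ j ≤ d) with y_i ∈ ℤ_{≥0}^s, where I_1,...,I_d is a partition of {1,...,m} and each b^j is supported on I_j. This system admits a solution x ∈ ℝ^s_{>0} if and only if (i) for every j the nonzero entries of b^j all have the same sign, and (ii) the row vector Θ with entries ln(b^j_{j1}/b^j_{j2}) is orthogonal to ker(Δ), where Δ is the matrix with columns (y_{j1}−y_{j2})^t. -/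
open Finset

lemma factor_aux {n σ : Type*} [Fintype n] [Fintype σ] [DecidableEq n] [DecidableEq σ]
    (A : n → σ → ℝ) (θ : n → ℝ)
    (h : ∀ u : n → ℝ, (∀ l, ∑ t, A t l * u t = 0) → ∑ t, θ t * u t = 0) :
    ∃ c : σ → ℝ, ∀ t, θ t = ∑ l, A t l * c l := by
  classical
  let D : (n → ℝ) →ₗ[ℝ] (σ → ℝ) := Matrix.mulVecLin (Matrix.of fun l t => A t l)
  let φ : (n → ℝ) →ₗ[ℝ] ℝ :=
    { toFun := fun u => ∑ t, θ t * u t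
      map_add' := by intro u v; simp [mul_add, Finset.sum_add_distrib]
      map_smul' := by intro r u; simp [Finset.mul_sum, mul_left_comm] }
  have hker : LinearMap.ker D ≤ LinearMap.ker φ := by
    intro u hu
    have hu' : D u = 0 := hu
    have hl : ∀ l, ∑ t, A t l * u t = 0 := by
      intro l
      have := congrFun hu' l
      simpa [D, Matrix.mulVecLin_apply, Matrix.mulVec, dotProduct] using this
    exact h u hl
  let g : LinearMap.range D →ₗ[ℝ] ℝ :=
    ((LinearMap.ker D).liftQ φ hker).comp (D.quotKerEquivRange).symm.toLinearMap
  obtain ⟨ψ, hψ⟩ := g.exists_extend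
  have key : ∀ u, ψ (D u) = φ u := by
    intro u
    have h1 : ψ (D u) = g ⟨D u, LinearMap.mem_range_self D u⟩ := by
      rw [← hψ]; rfl
    rw [h1]
    simp [g, LinearMap.quotKerEquivRange_symm_apply_image]
  refine ⟨fun l => ψ (fun j => if l = j then 1 else 0), fun t => ?_⟩
  have e1 : θ t = φ (fun t' => if t = t' then 1 else 0) := by
    simp [φ, mul_ite, Finset.sum_ite_eq]
  have e2 : D (fun t' => if t = t' then 1 else 0) = fun l => A t l := by
    funext l
    simp [D, Matrix.mulVecLin_apply, Matrix.mulVec, dotProduct, mul_ite,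
      Finset.sum_ite_eq]
  rw [e1, ← key, e2]
  rw [LinearMap.pi_apply_eq_sum_univ ψ (fun l => A t l)]
  simp [smul_eq_mul]

/-- The binomial system b^j_{j1} x^{y_{j2}} − b^j_{j2} x^{y_{j1}} = 0
admits a positive solution iff (i) each b^j has all nonzero entries of the same
sign and (ii) Θ = (ln(b^j_{j1}/b^j_{j2})) is orthogonal to ker(Δ), where Δ has
columns (y_{j1} − y_{j2}). -/
theorem stmt6 (s m d : ℕ) (y : Fin m → Fin s → ℕ)
    (I : Fin d → Finset (Fin m))
    (hNonempty : ∀ j, (I j).Nonempty)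
    (hDisj : ∀ j j', j ≠ j' → Disjoint (I j) (I j'))
    (hCover : ∀ i : Fin m, ∃ j, i ∈ I j)
    (b : Fin d → Fin m → ℝ)
    (hsupp : ∀ j i, b j i ≠ 0 ↔ i ∈ I j) :
    (∃ x : Fin s → ℝ, (∀ l, 0 < x l) ∧
      ∀ j j1 j2, j1 ∈ I j → j2 ∈ I j →
        b j j1 * ∏ l : Fin s, x l ^ y j2 l
          - b j j2 * ∏ l : Fin s, x l ^ y j1 l = 0) ↔
    ((∀ j, ∀ j1 ∈ I j, ∀ j2 ∈ I j, 0 < b j j1 * b j j2) ∧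
      (∀ u : {t : Fin d × Fin m × Fin m // t.2.1 ∈ I t.1 ∧ t.2.2 ∈ I t.1} → ℝ,
        (∀ l : Fin s,
          (∑ t : {t : Fin d × Fin m × Fin m // t.2.1 ∈ I t.1 ∧ t.2.2 ∈ I t.1},
            ((y t.1.2.1 l : ℝ) - (y t.1.2.2 l : ℝ)) * u t) = 0) →
        (∑ t : {t : Fin d × Fin m × Fin m // t.2.1 ∈ I t.1 ∧ t.2.2 ∈ I t.1},
          Real.log (b t.1.1 t.1.2.1 / b t.1.1 t.1.2.2) * u t) = 0)) := by
  classical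
  constructor
  · rintro ⟨x, hx, heq⟩
    have Ppos : ∀ i : Fin m, 0 < ∏ l : Fin s, x l ^ y i l :=
      fun i => Finset.prod_pos fun l _ => pow_pos (hx l) _
    constructor
    · intro j j1 h1 j2 h2
      have e := heq j j1 j2 h1 h2
      have hb1 : b j j1 ≠ 0 := (hsupp j j1).mpr h1
      have hsq : 0 < b j j1 * b j j1 := mul_self_pos.mpr hb1
      have key : b j j1 * b j j2 * (∏ l : Fin s, x l ^ y j1 l)
          = (b j j1 * b j j1) * (∏ l : Fin s, x l ^ y j2 l) := by
        linear_combination (-(b j j1)) * e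
      nlinarith [Ppos j1, Ppos j2, mul_pos hsq (Ppos j2)]
    · intro u hu
      have Θeq : ∀ t : {t : Fin d × Fin m × Fin m // t.2.1 ∈ I t.1 ∧ t.2.2 ∈ I t.1},
          Real.log (b t.1.1 t.1.2.1 / b t.1.1 t.1.2.2)
            = ∑ l : Fin s, ((y t.1.2.1 l : ℝ) - (y t.1.2.2 l : ℝ)) * Real.log (x l) := by
        rintro ⟨⟨j, j1, j2⟩, h1, h2⟩
        have e := heq j j1 j2 h1 h2
        have hb1 : b j j1 ≠ 0 := (hsupp j j1).mpr h1
        have hb2 : b j j2 ≠ 0 := (hsupp j j2).mpr h2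
        have hdiv : b j j1 / b j j2
            = (∏ l : Fin s, x l ^ y j1 l) / (∏ l : Fin s, x l ^ y j2 l) := by
          have hP2 : (∏ l : Fin s, x l ^ y j2 l) ≠ 0 := (Ppos j2).ne'
          field_simp
          linarith [e]
        simp only [hdiv]
        rw [Real.log_div (Ppos j1).ne' (Ppos j2).ne',
          Real.log_prod (fun l _ => (pow_pos (hx l) _).ne'),
          Real.log_prod (fun l _ => (pow_pos (hx l) _).ne')]
        simp only [Real.log_pow]
        rw [← Finset.sum_sub_distrib]
        apply Finset.sum_congr rfl
        intro l _
        ring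
      calc ∑ t : {t : Fin d × Fin m × Fin m // t.2.1 ∈ I t.1 ∧ t.2.2 ∈ I t.1},
            Real.log (b t.1.1 t.1.2.1 / b t.1.1 t.1.2.2) * u t
          = ∑ t : {t : Fin d × Fin m × Fin m // t.2.1 ∈ I t.1 ∧ t.2.2 ∈ I t.1},
              ∑ l : Fin s, (((y t.1.2.1 l : ℝ) - (y t.1.2.2 l : ℝ)) * u t)
                * Real.log (x l) := by
            apply Finset.sum_congr rfl
            intro t _
            rw [Θeq t, Finset.sum_mul]
            apply Finset.sum_congr rfl
            intro l _
            ring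
        _ = ∑ l : Fin s,
              (∑ t : {t : Fin d × Fin m × Fin m // t.2.1 ∈ I t.1 ∧ t.2.2 ∈ I t.1},
                ((y t.1.2.1 l : ℝ) - (y t.1.2.2 l : ℝ)) * u t) * Real.log (x l) := by
            rw [Finset.sum_comm]
            apply Finset.sum_congr rfl
            intro l _
            rw [Finset.sum_mul]
        _ = 0 := by
            apply Finset.sum_eq_zero
            intro l _
            rw [hu l, zero_mul]
  · rintro ⟨hsign, horth⟩
    obtain ⟨c, hc⟩ := factor_aux
      (fun t : {t : Fin d × Fin m × Fin m // t.2.1 ∈ I t.1 ∧ t.2.2 ∈ I t.1} =>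
        fun l => ((y t.1.2.1 l : ℝ) - (y t.1.2.2 l : ℝ)))
      (fun t => Real.log (b t.1.1 t.1.2.1 / b t.1.1 t.1.2.2)) horth
    refine ⟨fun l => Real.exp (c l), fun l => Real.exp_pos _, ?_⟩
    intro j j1 j2 h1 h2
    have hb1 : b j j1 ≠ 0 := (hsupp j j1).mpr h1
    have hb2 : b j j2 ≠ 0 := (hsupp j j2).mpr h2
    have hbb : 0 < b j j1 * b j j2 := hsign j j1 h1 j2 h2
    have hP : ∀ i : Fin m, (∏ l : Fin s, Real.exp (c l) ^ y i l)
        = Real.exp (∑ l : Fin s, (y i l : ℝ) * c l) := by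
      intro i
      rw [Real.exp_sum]
      apply Finset.prod_congr rfl
      intro l _
      rw [← Real.exp_nat_mul]
    have ht := hc ⟨(j, j1, j2), h1, h2⟩
    simp only at ht
    have hdivpos : 0 < b j j1 / b j j2 := div_pos_iff.mpr <| by
      rcases mul_pos_iff.mp hbb with ⟨ha, hb⟩ | ⟨ha, hb⟩
      · exact Or.inl ⟨ha, hb⟩
      · exact Or.inr ⟨ha, hb⟩
    have hexp : b j j1 / b j j2
        = Real.exp (∑ l : Fin s, ((y j1 l : ℝ) - (y j2 l : ℝ)) * c l) := by
      rw [← ht, Real.exp_log hdivpos]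
    have hsplit : Real.exp (∑ l : Fin s, ((y j1 l : ℝ) - (y j2 l : ℝ)) * c l)
        = Real.exp (∑ l : Fin s, (y j1 l : ℝ) * c l)
          / Real.exp (∑ l : Fin s, (y j2 l : ℝ) * c l) := by
      rw [← Real.exp_sub]
      congr 1
      rw [← Finset.sum_sub_distrib]
      apply Finset.sum_congr rfl
      intro l _
      ring
    rw [hP j1, hP j2]
    have hE2 : Real.exp (∑ l : Fin s, (y j2 l : ℝ) * c l) ≠ 0 := (Real.exp_pos _).ne'
    have : b j j1 / b j j2 = Real.exp (∑ l : Fin s, (y j1 l : ℝ) * c l)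
        / Real.exp (∑ l : Fin s, (y j2 l : ℝ) * c l) := by
      rw [hexp, hsplit]
    field_simp at this
    linarith [this]
end

section
/- Let x̃ ∈ ℝ^s_{>0} be a solution of the binomial system b^j_{j1} x^{y_{j2}} = b^j_{j2} x^{y_{j1}} (for all j1,j2 ∈ I_j, 1 ≤ j ≤ d), and let A ∈ ℤ^{w×s} be a matrix of rank w whose kernel equals the real span of all differences y_{j2} − y_{j1} (j1,j2 ∈ I_j). Then x ∈ ℝ^s_{>0} solves the binomial system if and only if x = (x̃_1 t^{A_1},..., x̃_s t^{A_s}) for some t ∈ ℝ^w_{>0}, where A_i is the i-th column of A and t^{A_i} = ∏_ℓ t_ℓ^{(A_i)_ℓ}. -/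
open Finset in
lemma rowspace_of_orth {w s : ℕ} (B : Matrix (Fin w) (Fin s) ℝ) (v : Fin s → ℝ)
    (h : ∀ u : Fin s → ℝ, B.mulVec u = 0 → ∑ l, u l * v l = 0) :
    ∃ c : Fin w → ℝ, ∀ i, v i = ∑ ℓ, c ℓ * B ℓ i := by
  classical
  let E := EuclideanSpace ℝ (Fin s)
  let f : Fin w → E := fun ℓ => WithLp.toLp 2 (B ℓ)
  let R : Submodule ℝ E := Submodule.span ℝ (Set.range f)
  have hv : (WithLp.toLp 2 v : E) ∈ Rᗮᗮ := by
    intro u hu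
    have hBu : B.mulVec u.ofLp = 0 := by
      funext ℓ
      have := hu (f ℓ) (Submodule.subset_span ⟨ℓ, rfl⟩)
      simpa [E, PiLp.inner_apply, Matrix.mulVec, dotProduct, f, mul_comm] using this
    have := h u.ofLp hBu
    simpa [E, PiLp.inner_apply, mul_comm] using this
  rw [Submodule.orthogonal_orthogonal] at hv
  obtain ⟨c, hc⟩ := (Submodule.mem_span_range_iff_exists_fun ℝ).mp hv
  refine ⟨c, fun i => ?_⟩
  have := congrArg (fun z : E => z.ofLp i) hc
  simp only [E, EuclideanSpace, PiLp, WithLp] at this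
  rw [← this]
  simp [Finset.sum_apply, f, mul_comm]

lemma exp_zpow' (a : ℝ) (n : ℤ) : Real.exp a ^ n = Real.exp (n * a) := by
  rw [← Real.rpow_intCast, ← Real.exp_mul, mul_comm]

lemma log_prod_pow {s : ℕ} (x : Fin s → ℝ) (hx : ∀ i, 0 < x i) (y : Fin s → ℕ) :
    Real.log (∏ l, x l ^ y l) = ∑ l, (y l : ℝ) * Real.log (x l) := by
  rw [Real.log_prod (fun l _ => pow_ne_zero _ (hx l).ne')]
  simp [Real.log_pow]

/-- Given a positive solution x̃ of the binomial system and an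
integer matrix A of rank w whose real kernel is the span of the exponent
differences, the positive solutions are exactly the monomial orbit
x = (x̃_1 t^{A_1}, ..., x̃_s t^{A_s}), t ∈ ℝ^w_{>0}. -/
theorem stmt7 (s m d w : ℕ) (y : Fin m → Fin s → ℕ)
    (I : Fin d → Finset (Fin m))
    (hNonempty : ∀ j, (I j).Nonempty)
    (hDisj : ∀ j j', j ≠ j' → Disjoint (I j) (I j'))
    (hCover : ∀ i : Fin m, ∃ j, i ∈ I j)
    (b : Fin d → Fin m → ℝ)
    (hsupp : ∀ j i, b j i ≠ 0 ↔ i ∈ I j)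
    (hsign : ∀ j, ∀ j1 ∈ I j, ∀ j2 ∈ I j, 0 < b j j1 * b j j2)
    (A : Matrix (Fin w) (Fin s) ℤ)
    (hrank : (A.map (fun a : ℤ => (a : ℝ))).rank = w)
    (hkerA : ∀ v : Fin s → ℝ,
      (A.map (fun a : ℤ => (a : ℝ))).mulVec v = 0 ↔
      v ∈ Submodule.span ℝ { u : Fin s → ℝ | ∃ j j1 j2,
        j1 ∈ I j ∧ j2 ∈ I j ∧ u = fun l => (y j2 l : ℝ) - (y j1 l : ℝ) })
    (xt : Fin s → ℝ) (hxt : ∀ i, 0 < xt i)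
    (hxtsol : ∀ j j1 j2, j1 ∈ I j → j2 ∈ I j →
      b j j1 * ∏ l : Fin s, xt l ^ y j2 l = b j j2 * ∏ l : Fin s, xt l ^ y j1 l) :
    ∀ x : Fin s → ℝ, (∀ i, 0 < x i) →
      ((∀ j j1 j2, j1 ∈ I j → j2 ∈ I j →
          b j j1 * ∏ l : Fin s, x l ^ y j2 l
            = b j j2 * ∏ l : Fin s, x l ^ y j1 l) ↔
        ∃ t : Fin w → ℝ, (∀ ℓ, 0 < t ℓ) ∧
          ∀ i, x i = xt i * ∏ ℓ : Fin w, t ℓ ^ (A ℓ i)) := by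
  classical
  set B : Matrix (Fin w) (Fin s) ℝ := A.map (fun a : ℤ => (a : ℝ)) with hB
  have hBa : ∀ ℓ i, B ℓ i = (A ℓ i : ℝ) := fun ℓ i => rfl
  set S : Set (Fin s → ℝ) := { u : Fin s → ℝ | ∃ j j1 j2,
        j1 ∈ I j ∧ j2 ∈ I j ∧ u = fun l => (y j2 l : ℝ) - (y j1 l : ℝ) } with hS
  intro x hx
  constructor
  · -- forward
    intro hsol
    set v : Fin s → ℝ := fun l => Real.log (x l) - Real.log (xt l) with hv
    have hgen : ∀ g ∈ S, ∑ l, g l * v l = 0 := by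
      rintro g ⟨j, j1, j2, h1, h2, rfl⟩
      have hb1 : b j j1 ≠ 0 := (hsupp j j1).mpr h1
      have Px1 : (0:ℝ) < ∏ l, x l ^ y j1 l := Finset.prod_pos fun l _ => pow_pos (hx l) _
      have Px2 : (0:ℝ) < ∏ l, x l ^ y j2 l := Finset.prod_pos fun l _ => pow_pos (hx l) _
      have Pt1 : (0:ℝ) < ∏ l, xt l ^ y j1 l := Finset.prod_pos fun l _ => pow_pos (hxt l) _
      have Pt2 : (0:ℝ) < ∏ l, xt l ^ y j2 l := Finset.prod_pos fun l _ => pow_pos (hxt l) _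
      have key : (∏ l, x l ^ y j2 l) * (∏ l, xt l ^ y j1 l)
          = (∏ l, xt l ^ y j2 l) * (∏ l, x l ^ y j1 l) := by
        have e1 := hsol j j1 j2 h1 h2
        have e2 := hxtsol j j1 j2 h1 h2
        have : b j j1 * ((∏ l, x l ^ y j2 l) * (∏ l, xt l ^ y j1 l))
            = b j j1 * ((∏ l, xt l ^ y j2 l) * (∏ l, x l ^ y j1 l)) := by
          calc b j j1 * ((∏ l, x l ^ y j2 l) * (∏ l, xt l ^ y j1 l))
              = (b j j1 * ∏ l, x l ^ y j2 l) * (∏ l, xt l ^ y j1 l) := by ring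
            _ = (b j j2 * ∏ l, x l ^ y j1 l) * (∏ l, xt l ^ y j1 l) := by rw [e1]
            _ = (b j j2 * ∏ l, xt l ^ y j1 l) * (∏ l, x l ^ y j1 l) := by ring
            _ = (b j j1 * ∏ l, xt l ^ y j2 l) * (∏ l, x l ^ y j1 l) := by rw [← e2]
            _ = b j j1 * ((∏ l, xt l ^ y j2 l) * (∏ l, x l ^ y j1 l)) := by ring
        exact mul_left_cancel₀ hb1 this
      have hlog : Real.log ((∏ l, x l ^ y j2 l) * (∏ l, xt l ^ y j1 l))
          = Real.log ((∏ l, xt l ^ y j2 l) * (∏ l, x l ^ y j1 l)) := by rw [key]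
      rw [Real.log_mul Px2.ne' Pt1.ne', Real.log_mul Pt2.ne' Px1.ne',
        log_prod_pow x hx, log_prod_pow x hx, log_prod_pow xt hxt, log_prod_pow xt hxt] at hlog
      have expand : ∑ l, ((y j2 l : ℝ) - (y j1 l : ℝ)) * v l
          = (∑ l, (y j2 l : ℝ) * Real.log (x l) + ∑ l, (y j1 l : ℝ) * Real.log (xt l))
            - (∑ l, (y j2 l : ℝ) * Real.log (xt l) + ∑ l, (y j1 l : ℝ) * Real.log (x l)) := by
        rw [← Finset.sum_add_distrib, ← Finset.sum_add_distrib, ← Finset.sum_sub_distrib]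
        exact Finset.sum_congr rfl fun l _ => by simp only [hv]; ring
      rw [expand, hlog]; ring
    have hspan : ∀ u ∈ Submodule.span ℝ S, ∑ l, u l * v l = 0 := by
      intro u hu
      induction hu using Submodule.span_induction with
      | mem g hg => exact hgen g hg
      | zero => simp
      | add a c _ _ iha ihc =>
          rw [show ∑ l, (a + c) l * v l = (∑ l, a l * v l) + ∑ l, c l * v l by
            rw [← Finset.sum_add_distrib]
            exact Finset.sum_congr rfl fun l _ => by simp [add_mul]]
          rw [iha, ihc]; ring
      | smul r a _ iha =>
          rw [show ∑ l, (r • a) l * v l = r * ∑ l, a l * v l by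
            rw [Finset.mul_sum]
            exact Finset.sum_congr rfl fun l _ => by simp; ring]
          rw [iha]; ring
    obtain ⟨c, hc⟩ := rowspace_of_orth B v fun u hu => hspan u ((hkerA u).mp hu)
    refine ⟨fun ℓ => Real.exp (c ℓ), fun ℓ => Real.exp_pos _, fun i => ?_⟩
    have hpr : ∏ ℓ, Real.exp (c ℓ) ^ (A ℓ i) = Real.exp (v i) := by
      rw [hc i, Real.exp_sum]
      exact Finset.prod_congr rfl fun ℓ _ => by
        rw [exp_zpow']; congr 1; rw [hBa]; ring
    rw [hpr, hv]
    rw [Real.exp_sub, Real.exp_log (hx i), Real.exp_log (hxt i)]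
    rw [mul_div_assoc']
    rw [mul_comm, mul_div_assoc, div_self (hxt i).ne', mul_one]
  · -- backward
    rintro ⟨t, ht, hxform⟩ j j1 j2 h1 h2
    set c : Fin w → ℝ := fun ℓ => Real.log (t ℓ) with hcdef
    have hxexp : ∀ i, x i = xt i * Real.exp (∑ ℓ, c ℓ * B ℓ i) := by
      intro i
      rw [hxform i, Real.exp_sum]
      congr 1
      refine Finset.prod_congr rfl fun ℓ _ => ?_
      rw [← Real.exp_log (ht ℓ), exp_zpow']
      congr 1
      rw [hBa, hcdef]
      simp [Real.log_exp]
      ring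
    have hprod : ∀ z : Fin m, ∏ l, x l ^ y z l
        = (∏ l, xt l ^ y z l) * Real.exp (∑ l, (y z l : ℝ) * ∑ ℓ, c ℓ * B ℓ l) := by
      intro z
      rw [Real.exp_sum, ← Finset.prod_mul_distrib]
      refine Finset.prod_congr rfl fun l _ => ?_
      rw [hxexp l, mul_pow, ← Real.exp_nat_mul]
    have hg : B.mulVec (fun l => (y j2 l : ℝ) - (y j1 l : ℝ)) = 0 :=
      (hkerA _).mpr (Submodule.subset_span ⟨j, j1, j2, h1, h2, rfl⟩)
    have hexp_eq : ∑ l, (y j2 l : ℝ) * ∑ ℓ, c ℓ * B ℓ l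
        = ∑ l, (y j1 l : ℝ) * ∑ ℓ, c ℓ * B ℓ l := by
      have key : ∑ l, ((y j2 l : ℝ) - (y j1 l : ℝ)) * ∑ ℓ, c ℓ * B ℓ l = 0 := by
        calc ∑ l, ((y j2 l : ℝ) - (y j1 l : ℝ)) * ∑ ℓ, c ℓ * B ℓ l
            = ∑ l, ∑ ℓ, c ℓ * (B ℓ l * ((y j2 l : ℝ) - (y j1 l : ℝ))) := by
              refine Finset.sum_congr rfl fun l _ => ?_
              rw [Finset.mul_sum]
              exact Finset.sum_congr rfl fun ℓ _ => by ring
          _ = ∑ ℓ, c ℓ * ∑ l, B ℓ l * ((y j2 l : ℝ) - (y j1 l : ℝ)) := by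
              rw [Finset.sum_comm]
              exact Finset.sum_congr rfl fun ℓ _ => by rw [Finset.mul_sum]
          _ = ∑ ℓ, c ℓ * (B.mulVec (fun l => (y j2 l : ℝ) - (y j1 l : ℝ))) ℓ := rfl
          _ = 0 := by rw [hg]; simp
      have := key
      rw [show ∑ l, ((y j2 l : ℝ) - (y j1 l : ℝ)) * ∑ ℓ, c ℓ * B ℓ l
          = (∑ l, (y j2 l : ℝ) * ∑ ℓ, c ℓ * B ℓ l)
            - ∑ l, (y j1 l : ℝ) * ∑ ℓ, c ℓ * B ℓ l by
        rw [← Finset.sum_sub_distrib]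
        exact Finset.sum_congr rfl fun l _ => by ring] at this
      linarith
    rw [hprod j2, hprod j1, hexp_eq]
    calc b j j1 * ((∏ l, xt l ^ y j2 l) * Real.exp (∑ l, (y j1 l : ℝ) * ∑ ℓ, c ℓ * B ℓ l))
        = (b j j1 * ∏ l, xt l ^ y j2 l) * Real.exp (∑ l, (y j1 l : ℝ) * ∑ ℓ, c ℓ * B ℓ l) := by
          ring
      _ = (b j j2 * ∏ l, xt l ^ y j1 l) * Real.exp (∑ l, (y j1 l : ℝ) * ∑ ℓ, c ℓ * B ℓ l) := by
          rw [hxtsol j j1 j2 h1 h2]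
      _ = b j j2 * ((∏ l, xt l ^ y j1 l) * Real.exp (∑ l, (y j1 l : ℝ) * ∑ ℓ, c ℓ * B ℓ l)) := by
          ring
end

section
/- Any two positive solutions x^1, x^2 of the binomial system b^j_{j1} x^{y_{j2}} = b^j_{j2} x^{y_{j1}} (j1,j2 ∈ I_j, 1 ≤ j ≤ d) satisfy ln x^2 − ln x^1 ∈ span{ y_{j2} − y_{j1} : j1,j2 ∈ I_j, 1 ≤ j ≤ d }^⊥. -/
/-- Any two positive solutions x^1, x^2 of the binomial system
satisfy ln x^2 − ln x^1 ∈ (span of the exponent differences)^⊥. -/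
theorem stmt9 (s m d : ℕ) (y : Fin m → Fin s → ℕ)
    (I : Fin d → Finset (Fin m))
    (hNonempty : ∀ j, (I j).Nonempty)
    (hDisj : ∀ j j', j ≠ j' → Disjoint (I j) (I j'))
    (hCover : ∀ i : Fin m, ∃ j, i ∈ I j)
    (b : Fin d → Fin m → ℝ)
    (hsupp : ∀ j i, b j i ≠ 0 ↔ i ∈ I j)
    (x1 x2 : Fin s → ℝ) (hx1 : ∀ l, 0 < x1 l) (hx2 : ∀ l, 0 < x2 l)
    (hsol1 : ∀ j j1 j2, j1 ∈ I j → j2 ∈ I j →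
      b j j1 * ∏ l : Fin s, x1 l ^ y j2 l = b j j2 * ∏ l : Fin s, x1 l ^ y j1 l)
    (hsol2 : ∀ j j1 j2, j1 ∈ I j → j2 ∈ I j →
      b j j1 * ∏ l : Fin s, x2 l ^ y j2 l = b j j2 * ∏ l : Fin s, x2 l ^ y j1 l) :
    ∀ u : Fin s → ℝ,
      u ∈ Submodule.span ℝ { u : Fin s → ℝ | ∃ j j1 j2,
        j1 ∈ I j ∧ j2 ∈ I j ∧ u = fun l => (y j2 l : ℝ) - (y j1 l : ℝ) } →
      (∑ l : Fin s, (Real.log (x2 l) - Real.log (x1 l)) * u l) = 0 := by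
  -- the linear functional
  set L : (Fin s → ℝ) →ₗ[ℝ] ℝ :=
    { toFun := fun u => ∑ l : Fin s, (Real.log (x2 l) - Real.log (x1 l)) * u l
      map_add' := by
        intro u v
        simp [mul_add, Finset.sum_add_distrib]
      map_smul' := by
        intro c u
        simp only [RingHom.id_apply, Finset.mul_sum, Pi.smul_apply, smul_eq_mul]
        exact Finset.sum_congr rfl fun l _ => by ring } with hL
  intro u hu
  have key : Submodule.span ℝ { u : Fin s → ℝ | ∃ j j1 j2,
      j1 ∈ I j ∧ j2 ∈ I j ∧ u = fun l => (y j2 l : ℝ) - (y j1 l : ℝ) }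
      ≤ LinearMap.ker L := by
    rw [Submodule.span_le]
    rintro _ ⟨j, j1, j2, h1, h2, rfl⟩
    -- log of the monomials
    have logP : ∀ (x : Fin s → ℝ), (∀ l, 0 < x l) → ∀ k : Fin m,
        Real.log (∏ l : Fin s, x l ^ y k l) = ∑ l : Fin s, (y k l : ℝ) * Real.log (x l) := by
      intro x hx k
      rw [Real.log_prod]
      · exact Finset.sum_congr rfl fun l _ => by rw [Real.log_pow]
      · intro l _
        exact pow_ne_zero _ (ne_of_gt (hx l))
    have hb1 : b j j1 ≠ 0 := (hsupp j j1).mpr h1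
    have P1pos : ∀ k : Fin m, (0:ℝ) < ∏ l : Fin s, x1 l ^ y k l :=
      fun k => Finset.prod_pos fun l _ => pow_pos (hx1 l) _
    have P2pos : ∀ k : Fin m, (0:ℝ) < ∏ l : Fin s, x2 l ^ y k l :=
      fun k => Finset.prod_pos fun l _ => pow_pos (hx2 l) _
    have e1 := hsol1 j j1 j2 h1 h2
    have e2 := hsol2 j j1 j2 h1 h2
    -- cross-multiplied equality
    have cross : (∏ l : Fin s, x2 l ^ y j2 l) * (∏ l : Fin s, x1 l ^ y j1 l)
        = (∏ l : Fin s, x1 l ^ y j2 l) * (∏ l : Fin s, x2 l ^ y j1 l) := by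
      have h := congrArg₂ (· * ·) e1 e2
      -- b j1 * P1(j2) * (b j1 * P2(j2)) = b j2 * P1(j1) * (b j2 * P2(j1))
      -- instead: derive from e1, e2 directly
      have h3 : b j j1 * ((∏ l : Fin s, x2 l ^ y j2 l) * (∏ l : Fin s, x1 l ^ y j1 l))
          = b j j1 * ((∏ l : Fin s, x1 l ^ y j2 l) * (∏ l : Fin s, x2 l ^ y j1 l)) := by
        calc b j j1 * ((∏ l : Fin s, x2 l ^ y j2 l) * (∏ l : Fin s, x1 l ^ y j1 l))
            = (b j j1 * ∏ l : Fin s, x2 l ^ y j2 l) * (∏ l : Fin s, x1 l ^ y j1 l) := by ring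
          _ = (b j j2 * ∏ l : Fin s, x2 l ^ y j1 l) * (∏ l : Fin s, x1 l ^ y j1 l) := by rw [e2]
          _ = (b j j2 * ∏ l : Fin s, x1 l ^ y j1 l) * (∏ l : Fin s, x2 l ^ y j1 l) := by ring
          _ = (b j j1 * ∏ l : Fin s, x1 l ^ y j2 l) * (∏ l : Fin s, x2 l ^ y j1 l) := by rw [e1]
          _ = b j j1 * ((∏ l : Fin s, x1 l ^ y j2 l) * (∏ l : Fin s, x2 l ^ y j1 l)) := by ring
      exact mul_left_cancel₀ hb1 h3
    -- take logs
    have logeq : Real.log (∏ l : Fin s, x2 l ^ y j2 l) + Real.log (∏ l : Fin s, x1 l ^ y j1 l)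
        = Real.log (∏ l : Fin s, x1 l ^ y j2 l) + Real.log (∏ l : Fin s, x2 l ^ y j1 l) := by
      rw [← Real.log_mul (ne_of_gt (P2pos j2)) (ne_of_gt (P1pos j1)),
        ← Real.log_mul (ne_of_gt (P1pos j2)) (ne_of_gt (P2pos j1)), cross]
    rw [logP x2 hx2 j2, logP x1 hx1 j1, logP x1 hx1 j2, logP x2 hx2 j1] at logeq
    rw [SetLike.mem_coe, LinearMap.mem_ker]
    show (∑ l : Fin s, (Real.log (x2 l) - Real.log (x1 l)) * ((y j2 l : ℝ) - (y j1 l : ℝ))) = 0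
    have : ∑ l : Fin s, (Real.log (x2 l) - Real.log (x1 l)) * ((y j2 l : ℝ) - (y j1 l : ℝ))
        = (∑ l : Fin s, (y j2 l : ℝ) * Real.log (x2 l) + ∑ l : Fin s, (y j1 l : ℝ) * Real.log (x1 l))
          - (∑ l : Fin s, (y j2 l : ℝ) * Real.log (x1 l) + ∑ l : Fin s, (y j1 l : ℝ) * Real.log (x2 l)) := by
      simp only [← Finset.sum_add_distrib, ← Finset.sum_sub_distrib]
      exact Finset.sum_congr rfl fun l _ => by ring
    rw [this, logeq, sub_self]
  have := key hu
  rw [LinearMap.mem_ker] at this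
  exact this
end

section
/- Let N ∈ ℝ^{s×r} be the stoichiometric matrix of a reaction network, φ(x) the vector of educt monomials, and M a non-negative s.t. its columns generate the cone ker(N) ∩ ℝ^r_{≥0}. A positive vector x ∈ ℝ^s_{>0} is a steady state for the system defined by rate constant vector k ∈ ℝ^r_{>0} (i.e., N·diag(k)·φ(x) = 0) if and only if there exists λ ∈ ℝ^p_{≥0} such that k = diag(φ(x))^{−1}·M·λ and M·λ ∈ ℝ^r_{>0}. -/
/-- x > 0 is a steady state of N·diag(k)·φ(x) = 0 iff
k = diag(φ(x))⁻¹·M·λ for some λ ≥ 0 with M·λ > 0, where the columns of M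
generate the cone ker(N) ∩ ℝ^r_{≥0}. -/
theorem stmt14 (s r p : ℕ) (N : Matrix (Fin s) (Fin r) ℝ)
    (yt : Fin r → Fin s → ℕ)
    (M : Matrix (Fin r) (Fin p) ℝ) (hMnonneg : ∀ i j, 0 ≤ M i j)
    (hcone : ∀ v : Fin r → ℝ,
      (N.mulVec v = 0 ∧ ∀ i, 0 ≤ v i) ↔
      ∃ lam : Fin p → ℝ, (∀ i, 0 ≤ lam i) ∧ v = M.mulVec lam)
    (x : Fin s → ℝ) (hx : ∀ l, 0 < x l)
    (k : Fin r → ℝ) (hk : ∀ i, 0 < k i) :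
    N.mulVec (fun i => k i * ∏ l : Fin s, x l ^ yt i l) = 0 ↔
    ∃ lam : Fin p → ℝ, (∀ i, 0 ≤ lam i) ∧
      (∀ i, k i = (∏ l : Fin s, x l ^ yt i l)⁻¹ * M.mulVec lam i) ∧
      (∀ i, 0 < M.mulVec lam i) := by
  have hphi : ∀ i, 0 < ∏ l : Fin s, x l ^ yt i l := fun i =>
    Finset.prod_pos fun l _ => pow_pos (hx l) _
  constructor
  · intro h
    obtain ⟨lam, hlam, hv⟩ := (hcone _).mp ⟨h, fun i => le_of_lt (mul_pos (hk i) (hphi i))⟩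
    refine ⟨lam, hlam, ?_, ?_⟩
    · intro i
      have := congrFun hv i
      rw [← this]
      field_simp
      exact (mul_div_cancel_right₀ _ (hphi i).ne').symm
    · intro i
      have := congrFun hv i
      rw [← this]
      exact mul_pos (hk i) (hphi i)
  · rintro ⟨lam, hlam, hk', hpos⟩
    have hv : (fun i => k i * ∏ l : Fin s, x l ^ yt i l) = M.mulVec lam := by
      funext i
      rw [hk' i]
      field_simp
      exact mul_div_cancel_left₀ _ (hphi i).ne' 
    rw [hv]
    exact ((hcone _).mpr ⟨lam, hlam, rfl⟩).1
end
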